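/- Let J be a finite bipartite graph with parts A and B, where |A| = a, every vertex of A has degree at least d with 1 ≤ d ≤ a, and no two distinct vertices of A have a common neighbor. Then J has at least C(a + d − 1, d − 1) pairwise non-isomorphic spanning subgraphs; that is, there is a family of at least C(a + d − 1, d − 1) subgraphs of J, all on the full vertex set of J, no two of which are isomorphic as graphs. -/

import Mathlib

set_option maxHeartbeats 1000000

open Finset

/-- Any multiset of the right cardinality is the image of a finset under some function. -/
private lemma exists_map_multiset {V α : Type*} [DecidableEq V] [DecidableEq α] [Nonempty α]
    (s : Finset V) : ∀ m : Multiset α, Multiset.card m = s.card →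
    ∃ c : V → α, s.val.map c = m := by
  induction s using Finset.induction with
  | empty =>
    intro m hm
    refine ⟨fun _ => Classical.arbitrary α, ?_⟩
    simp_all
  | @insert v s hv ih =>
    intro m hm
    have hm' : Multiset.card m = s.card + 1 := by
      rwa [Finset.card_insert_of_notMem hv] at hm
    have hne : m ≠ 0 := by
      intro h; rw [h] at hm'; simp at hm'
    obtain ⟨x, hx⟩ := Multiset.exists_mem_of_ne_zero hne
    obtain ⟨c', hc'⟩ := ih (m.erase x) (by
      rw [Multiset.card_erase_of_mem hx, hm']; rfl)
    refine ⟨Function.update c' v x, ?_⟩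
    rw [Finset.insert_val_of_notMem hv, Multiset.map_cons]
    have : Multiset.map (Function.update c' v x) s.val = Multiset.map c' s.val := by
      apply Multiset.map_congr rfl
      intro u hu
      have huv : u ≠ v := by rintro rfl; exact hv hu
      simp [Function.update_of_ne huv]
    rw [this, hc', Function.update_self, Multiset.cons_erase hx]

private lemma countP_le_eq {d : ℕ} (b : Fin d) (m : Multiset (Fin d)) :
    Multiset.countP (fun x : Fin d => (b : ℕ) ≤ (x : ℕ)) m
      = m.count b + Multiset.countP (fun x : Fin d => (b : ℕ) + 1 ≤ (x : ℕ)) m := by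
  induction m using Multiset.induction with
  | empty => simp
  | cons x m ih =>
    by_cases h : x = b
    · subst h
      rw [Multiset.countP_cons_of_pos (p := fun y : Fin d => (x : ℕ) ≤ (y : ℕ)) _
          (le_refl (x : ℕ)),
        Multiset.countP_cons_of_neg (p := fun y : Fin d => (x : ℕ) + 1 ≤ (y : ℕ)) _
          (show ¬((x : ℕ) + 1 ≤ (x : ℕ)) by omega),
        Multiset.count_cons_self, ih]
      omega
    · have hxb : (x : ℕ) ≠ (b : ℕ) := fun hh => h (Fin.ext hh)
      rw [Multiset.count_cons_of_ne (fun hh => h hh.symm)]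
      by_cases h2 : (b : ℕ) ≤ (x : ℕ)
      · rw [Multiset.countP_cons_of_pos (p := fun y : Fin d => (b : ℕ) ≤ (y : ℕ)) _ h2,
          Multiset.countP_cons_of_pos (p := fun y : Fin d => (b : ℕ) + 1 ≤ (y : ℕ)) _
            (show (b : ℕ) + 1 ≤ (x : ℕ) by omega), ih]
        omega
      · rw [Multiset.countP_cons_of_neg (p := fun y : Fin d => (b : ℕ) ≤ (y : ℕ)) _ h2,
          Multiset.countP_cons_of_neg (p := fun y : Fin d => (b : ℕ) + 1 ≤ (y : ℕ)) _
            (show ¬((b : ℕ) + 1 ≤ (x : ℕ)) by omega), ih]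

private lemma multiset_eq_of_countP {d : ℕ} (m m' : Multiset (Fin d))
    (h : ∀ k : ℕ, Multiset.countP (fun x : Fin d => k ≤ (x : ℕ)) m
        = Multiset.countP (fun x : Fin d => k ≤ (x : ℕ)) m') : m = m' := by
  ext b
  have h1 := h (b : ℕ)
  have h2 := h ((b : ℕ) + 1)
  have e1 := countP_le_eq b m
  have e2 := countP_le_eq b m'
  omega

/-- A finite bipartite graph with parts `A` and `B`, where `|A| = a`,
every vertex of `A` has degree at least `d` (`1 ≤ d ≤ a`), and no two distinct vertices
of `A` share a common neighbor, has at least `C(a + d - 1, d - 1)` pairwise non-isomorphic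
spanning subgraphs. -/
theorem nonisomorphic_spanning_subgraphs {V : Type*} [Fintype V] [DecidableEq V]
    (J : SimpleGraph V) [DecidableRel J.Adj]
    (A B : Finset V) (hdisj : Disjoint A B) (hcover : A ∪ B = Finset.univ)
    (hbip : ∀ u v : V, J.Adj u v → (u ∈ A ∧ v ∈ B) ∨ (u ∈ B ∧ v ∈ A))
    (a d : ℕ) (ha : A.card = a) (hd1 : 1 ≤ d) (hda : d ≤ a)
    (hdeg : ∀ u ∈ A, d ≤ J.degree u)
    (hnocommon : ∀ u ∈ A, ∀ v ∈ A, u ≠ v → ∀ w : V, ¬ (J.Adj u w ∧ J.Adj v w)) :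
    ∃ f : Fin (Nat.choose (a + d - 1) (d - 1)) → SimpleGraph V,
      (∀ i, f i ≤ J) ∧ ∀ i j, i ≠ j → IsEmpty (f i ≃g f j) := by
  classical
  haveI : Nonempty (Fin d) := ⟨⟨0, hd1⟩⟩
  -- the index equivalence with multisets
  have hcard : Fintype.card (Sym (Fin d) a) = Nat.choose (a + d - 1) (d - 1) := by
    rw [Sym.card_sym_eq_choose, Fintype.card_fin]
    rw [show d + a - 1 = a + d - 1 by omega]
    rw [← Nat.choose_symm (show d - 1 ≤ a + d - 1 by omega),
      show a + d - 1 - (d - 1) = a by omega]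
  obtain ⟨e⟩ : Nonempty (Fin (Nat.choose (a + d - 1) (d - 1)) ≃ Sym (Fin d) a) :=
    ⟨(Fintype.equivFinOfCardEq hcard).symm⟩
  -- choose, for each `u ∈ A`, an injective enumeration of `d` of its neighbors
  have hnb : ∀ u : V, ∃ g : Fin d → V,
      Function.Injective g ∧ (u ∈ A → ∀ i, J.Adj u (g i)) := by
    intro u
    by_cases hu : u ∈ A
    · have hd' : d ≤ (J.neighborFinset u).card := by
        rw [SimpleGraph.card_neighborFinset_eq_degree]; exact hdeg u hu
      obtain ⟨t, hts, htc⟩ := Finset.exists_subset_card_eq hd'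
      refine ⟨fun i => ((t.equivFinOfCardEq htc).symm i : V), ?_, fun _ i => ?_⟩
      · intro i j hij
        exact (t.equivFinOfCardEq htc).symm.injective (Subtype.ext hij)
      · have hmem : ((t.equivFinOfCardEq htc).symm i : V) ∈ J.neighborFinset u :=
          hts ((t.equivFinOfCardEq htc).symm i).2
        exact (SimpleGraph.mem_neighborFinset _ _ _).mp hmem
    · obtain ⟨t, _, htc⟩ := Finset.exists_subset_card_eq (s := A) (ha ▸ hda)
      exact ⟨fun i => ((t.equivFinOfCardEq htc).symm i : V),
        fun i j hij => (t.equivFinOfCardEq htc).symm.injective (Subtype.ext hij),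
        fun h => absurd h hu⟩
  choose nb hnbinj hnbadj using hnb
  -- the family of graphs, indexed by a function choosing degrees
  obtain ⟨G, hG⟩ : ∃ G : (V → Fin d) → SimpleGraph V, ∀ c x y, (G c).Adj x y ↔
      ((x ∈ A ∧ ∃ i, i ≤ c x ∧ y = nb x i) ∨ (y ∈ A ∧ ∃ i, i ≤ c y ∧ x = nb y i)) := by
    refine ⟨fun c =>
      { Adj := fun x y => (x ∈ A ∧ ∃ i, i ≤ c x ∧ y = nb x i) ∨
          (y ∈ A ∧ ∃ i, i ≤ c y ∧ x = nb y i)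
        symm := ⟨fun x y h => Or.symm h⟩
        loopless := ⟨by
          rintro x (⟨hx, i, hi, hxe⟩ | ⟨hx, i, hi, hxe⟩) <;>
          · have := hnbadj x hx i
            rw [← hxe] at this
            exact J.irrefl this⟩ }, fun c x y => Iff.rfl⟩
  have hle : ∀ c, G c ≤ J := by
    intro c x y h
    rw [hG] at h
    rcases h with ⟨hx, i, hi, rfl⟩ | ⟨hy, i, hi, rfl⟩
    · exact hnbadj x hx i
    · exact (hnbadj y hy i).symm
  -- neighbor sets in `G c`
  have hnbr : ∀ c, ∀ u ∈ A, (G c).neighborFinset u = (Finset.Iic (c u)).image (nb u) := by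
    intro c u hu
    ext y
    simp only [SimpleGraph.mem_neighborFinset, Finset.mem_image, Finset.mem_Iic]
    rw [hG]
    constructor
    · rintro (⟨_, i, hi, rfl⟩ | ⟨hy, i, hi, hui⟩)
      · exact ⟨i, hi, rfl⟩
      · exfalso
        have hadj : J.Adj y u := by rw [hui]; exact hnbadj y hy i
        rcases hbip y u hadj with ⟨_, huB⟩ | ⟨hyB, _⟩
        · exact (Finset.disjoint_left.mp hdisj hu) huB
        · exact (Finset.disjoint_left.mp hdisj hy) hyB
    · rintro ⟨i, hi, rfl⟩
      exact Or.inl ⟨hu, i, hi, rfl⟩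
  have hdegA : ∀ c, ∀ u ∈ A, (G c).degree u = (c u : ℕ) + 1 := by
    intro c u hu
    rw [← SimpleGraph.card_neighborFinset_eq_degree, hnbr c u hu,
      Finset.card_image_of_injective _ (hnbinj u), Fin.card_Iic]
  have hdegB : ∀ c, ∀ w, w ∉ A → (G c).degree w ≤ 1 := by
    intro c w hw
    rw [← SimpleGraph.card_neighborFinset_eq_degree]
    apply Finset.card_le_one.mpr
    intro x hx y hy
    rw [SimpleGraph.mem_neighborFinset, hG] at hx hy
    rcases hx with ⟨hwA, _⟩ | ⟨hxA, i, hi, hwi⟩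
    · exact absurd hwA hw
    rcases hy with ⟨hwA, _⟩ | ⟨hyA, j, hj, hwj⟩
    · exact absurd hwA hw
    by_contra hxy
    refine hnocommon x hxA y hyA hxy w ⟨?_, ?_⟩
    · rw [hwi]; exact hnbadj x hxA i
    · rw [hwj]; exact hnbadj y hyA j
  -- iso-invariance of degree counts
  have hinv : ∀ (H H' : SimpleGraph V) (φ : H ≃g H') (k : ℕ),
      (univ.filter fun v => k ≤ H.degree v).card
        = (univ.filter fun v => k ≤ H'.degree v).card := by
    intro H H' φ k
    have hdeg' : ∀ v, H'.degree (φ v) = H.degree v := by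
      intro v
      rw [← SimpleGraph.card_neighborSet_eq_degree, ← SimpleGraph.card_neighborSet_eq_degree]
      exact Fintype.card_congr (φ.mapNeighborSet v).symm
    have hdeg2 : ∀ v, H.degree (φ.symm v) = H'.degree v := by
      intro v
      rw [← SimpleGraph.card_neighborSet_eq_degree, ← SimpleGraph.card_neighborSet_eq_degree]
      exact Fintype.card_congr (φ.symm.mapNeighborSet v).symm
    apply Finset.card_bij' (fun v _ => φ v) (fun w _ => φ.symm w)
    · intro v hv
      simp only [Finset.mem_filter, Finset.mem_univ, true_and] at hv ⊢
      rw [hdeg']; exact hv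
    · intro w hw
      simp only [Finset.mem_filter, Finset.mem_univ, true_and] at hw ⊢
      rw [hdeg2]; exact hw
    · intro v _
      exact φ.symm_apply_apply v
    · intro w _
      exact φ.apply_symm_apply w
  -- degree counts in `G c`
  have hcount : ∀ c (k : ℕ), (univ.filter fun v => k + 2 ≤ (G c).degree v).card
      = (A.filter fun v => k + 1 ≤ (c v : ℕ)).card := by
    intro c k
    congr 1
    ext v
    simp only [Finset.mem_filter, Finset.mem_univ, true_and]
    by_cases hv : v ∈ A
    · rw [hdegA c v hv]
      constructor
      · intro h; exact ⟨hv, by omega⟩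
      · rintro ⟨_, h⟩; omega
    · constructor
      · intro h; have := hdegB c v hv; omega
      · rintro ⟨hvA, _⟩; exact absurd hvA hv
  -- choose a degree function realizing each multiset
  have hmc : ∀ m : Sym (Fin d) a, ∃ c : V → Fin d,
      A.val.map c = (m : Multiset (Fin d)) :=
    fun m => exists_map_multiset A _ (by rw [Sym.card_coe, ha])
  choose cm hcm using hmc
  -- filter cards equal countP of the multiset
  have hcf : ∀ (p : V → Prop) [DecidablePred p],
      (A.filter p).card = Multiset.countP p A.val := by
    intro p hp
    rw [Finset.card_def, Finset.filter_val, Multiset.countP_eq_card_filter]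
  have hfc : ∀ (m : Sym (Fin d) a) (k : ℕ),
      (A.filter fun v => k ≤ (cm m v : ℕ)).card
        = Multiset.countP (fun x : Fin d => k ≤ (x : ℕ)) (m : Multiset (Fin d)) := by
    intro m k
    rw [← hcm m, Multiset.countP_map, ← Multiset.countP_eq_card_filter, hcf]
  -- assemble
  refine ⟨fun i => G (cm (e i)), fun i => hle _, ?_⟩
  intro i j hij
  by_contra hcon
  rw [not_isEmpty_iff] at hcon
  obtain ⟨φ⟩ := hcon
  have key : ∀ k : ℕ, Multiset.countP (fun x : Fin d => k ≤ (x : ℕ)) ((e i) : Multiset (Fin d))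
      = Multiset.countP (fun x : Fin d => k ≤ (x : ℕ)) ((e j) : Multiset (Fin d)) := by
    intro k
    cases k with
    | zero =>
      have hp : ∀ m' : Multiset (Fin d),
          Multiset.countP (fun x : Fin d => 0 ≤ (x : ℕ)) m' = Multiset.card m' := by
        intro m'
        rw [Multiset.countP_eq_card_filter, Multiset.filter_eq_self.mpr]
        intro x _; exact Nat.zero_le _
      rw [hp, hp, Sym.card_coe, Sym.card_coe]
    | succ k =>
      rw [← hfc (e i) (k + 1), ← hfc (e j) (k + 1), ← hcount _ k, ← hcount _ k]
      exact hinv _ _ φ (k + 2)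
  have hem : e i = e j := Subtype.ext (multiset_eq_of_countP _ _ key)
  exact hij (e.injective hem)
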